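/- Let k have characteristic 2 and let A be an associative algebra with derivation D, D² = 0, and bracket [x,y] = xy + yx + D(y)D(x). Then for every x ∈ A with Dx = 0, one has [x,x] = 0. Moreover, defining Q(y) = y² on elements y with Dy = 0, one has [Q(y),x] = [y,[y,x]] for all such y and all x ∈ A. -/
import Mathlib


/-- `k` of characteristic 2, `A` an associative `k`-algebra, `D` a
`k`-linear derivation with `D² = 0`, bracket `[x,y] := xy + yx + D(y)D(x)`,
`Q(y) := y²`.  Then `[x,x] = 0` for every `x` with `Dx = 0`, and for every `y` with
`Dy = 0` and every `x ∈ A`, `[Q(y), x] = [y, [y, x]]`. -/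
theorem stmt11 (k : Type*) [Field k] [CharP k 2]
    (A : Type*) [Ring A] [Algebra k A]
    (D : A →ₗ[k] A)
    (hder : ∀ x y : A, D (x * y) = D x * y + x * D y)
    (hD2 : D ∘ₗ D = 0) :
    (∀ x : A, D x = 0 → x * x + x * x + D x * D x = 0) ∧
    (∀ y x : A, D y = 0 →
      (y * y) * x + x * (y * y) + D x * D (y * y) =
        y * (y * x + x * y + D x * D y) + (y * x + x * y + D x * D y) * y
          + D (y * x + x * y + D x * D y) * D y) := by
  have h2k : (1 + 1 : k) = 0 := by
    have : ((2:ℕ) : k) = 0 := CharP.cast_eq_zero k 2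
    push_cast at this
    linear_combination this
  have h2 : ∀ a : A, a + a = 0 := by
    intro a
    have : (1 + 1 : A) = 0 := by
      rw [show (1 + 1 : A) = algebraMap k A (1 + 1) by simp, h2k, map_zero]
    rw [show a + a = (1 + 1) * a by rw [add_mul, one_mul], this, zero_mul]
  constructor
  · intro x hx
    rw [hx, mul_zero, add_zero, h2]
  · intro y x hy
    have hyy : D (y * y) = 0 := by rw [hder, hy, mul_zero, zero_mul, add_zero]
    rw [hy, hyy, mul_zero, mul_zero]
    simp only [add_zero, zero_mul, mul_zero, mul_add, add_mul, ← mul_assoc]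
    abel_nf
    rw [show (2 : ℤ) • (y * x * y) = y * x * y + y * x * y from two_smul _ _, h2, add_zero]
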